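/- Let 𝒰 = ⋃_{m≥0} {1,2,3}^m and let (E_v)_{v ∈ 𝒰} be i.i.d. random variables with the exponential distribution of rate 1. For ε > 0 and n ∈ ℕ, say that the ternary branching structure with i.i.d. Exp(ε^{−2}) lifetimes contains the full regular ternary tree of depth n by time t if for every v ∈ {1,2,3}^n, ε² · Σ_{u a proper prefix of v (including the empty word)} E_u ≤ t. Then for every k ∈ ℕ and every A > 0 there exist a(k,A) > 0 and ε₁(k,A) ∈ (0, e^{−1}) such that for all ε ∈ (0, ε₁) and all t ≥ a ε² |log ε|, the probability that the structure contains the full regular ternary tree of depth ⌈A |log ε|⌉ by time t is at least 1 − ε^k. -/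

import Mathlib

open MeasureTheory ProbabilityTheory

lemma aux_exists_ofFn {n : ℕ} (v : List (Fin 3)) (hv : v.length = n) :
    ∃ f : Fin n → Fin 3, List.ofFn f = v := by
  subst hv; exact ⟨v.get, List.ofFn_get v⟩

lemma aux_pdf_eq (x : ℝ) :
    exponentialPDF 1 x * ENNReal.ofReal (Real.exp (2⁻¹ * x)) = 2 * exponentialPDF 2⁻¹ x := by
  rw [exponentialPDF_eq, exponentialPDF_eq]
  split_ifs with h
  · rw [← ENNReal.ofReal_mul (by positivity), ← ENNReal.ofReal_ofNat 2,
      ← ENNReal.ofReal_mul (by norm_num)]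
    congr 1
    rw [one_mul, one_mul, ← Real.exp_add]
    rw [show -x + 2⁻¹ * x = -(2⁻¹ * x) by ring]
    ring
  · simp

lemma aux_lintegral_exp {Ω : Type*} [MeasureSpace Ω] (X : Ω → ℝ)
    (hX : Measurable X) (hd : Measure.map X ℙ = expMeasure 1) :
    ∫⁻ ω, ENNReal.ofReal (Real.exp (2⁻¹ * X ω)) ∂ℙ = 2 := by
  have hf : Measurable fun x : ℝ => ENNReal.ofReal (Real.exp (2⁻¹ * x)) :=
    ENNReal.measurable_ofReal.comp ((measurable_const.mul measurable_id).exp)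
  have h1 : ∫⁻ ω, ENNReal.ofReal (Real.exp (2⁻¹ * X ω)) ∂ℙ
      = ∫⁻ x, ENNReal.ofReal (Real.exp (2⁻¹ * x)) ∂(expMeasure 1) := by
    rw [← hd, lintegral_map hf hX]
  rw [h1]
  have h2 : ∫⁻ x, ENNReal.ofReal (Real.exp (2⁻¹ * x)) ∂(expMeasure 1)
      = ∫⁻ x, (gammaPDF 1 1 * fun x => ENNReal.ofReal (Real.exp (2⁻¹ * x))) x := by
    rw [expMeasure, gammaMeasure]
    exact lintegral_withDensity_eq_lintegral_mul _
      ((measurable_gammaPDFReal 1 1).ennreal_ofReal) hf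
  rw [h2]
  have h4 : ∀ x : ℝ, (gammaPDF 1 1 * fun x => ENNReal.ofReal (Real.exp (2⁻¹ * x))) x
      = 2 * exponentialPDF 2⁻¹ x := fun x => aux_pdf_eq x
  simp_rw [h4]
  have h3 : ∫⁻ x : ℝ, 2 * exponentialPDF 2⁻¹ x = 2 * ∫⁻ x : ℝ, exponentialPDF 2⁻¹ x :=
    lintegral_const_mul 2 ((measurable_gammaPDFReal 1 2⁻¹).ennreal_ofReal)
  rw [h3, lintegral_exponentialPDF_eq_one (by norm_num : (0:ℝ) < 2⁻¹), mul_one]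

lemma aux_integrable {Ω : Type*} [MeasureSpace Ω] (X : Ω → ℝ)
    (hX : Measurable X) (hd : Measure.map X ℙ = expMeasure 1) :
    Integrable (fun ω => Real.exp (2⁻¹ * X ω)) ℙ := by
  refine ⟨((hX.const_mul _).exp).aestronglyMeasurable, ?_⟩
  rw [HasFiniteIntegral]
  have : ∀ ω, ‖Real.exp (2⁻¹ * X ω)‖ₑ = ENNReal.ofReal (Real.exp (2⁻¹ * X ω)) :=
    fun ω => Real.enorm_eq_ofReal (Real.exp_pos _).le
  simp_rw [this, aux_lintegral_exp X hX hd]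
  norm_num

lemma aux_mgf {Ω : Type*} [MeasureSpace Ω] (X : Ω → ℝ)
    (hX : Measurable X) (hd : Measure.map X ℙ = expMeasure 1) :
    mgf X ℙ 2⁻¹ = 2 := by
  rw [mgf, integral_eq_lintegral_of_nonneg_ae
    (Filter.Eventually.of_forall fun ω => (Real.exp_pos _).le)
    ((hX.const_mul _).exp).aestronglyMeasurable, aux_lintegral_exp X hX hd]
  norm_num

lemma aux_chernoff {Ω : Type*} [MeasureSpace Ω]
    [IsProbabilityMeasure (ℙ : Measure Ω)]
    (E : List (Fin 3) → Ω → ℝ)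
    (hmeas : ∀ v, Measurable (E v))
    (hindep : iIndepFun E ℙ)
    (hdist : ∀ v, Measure.map (E v) ℙ = expMeasure 1)
    (hint : ∀ v, Integrable (fun ω => Real.exp (2⁻¹ * E v ω)) ℙ)
    (hmgf : ∀ v, mgf (E v) ℙ 2⁻¹ = 2)
    (n : ℕ) (v : List (Fin 3)) (hv : v.length = n) (c : ℝ) :
    (ℙ {ω | c ≤ ∑ j ∈ Finset.range n, E (v.take j) ω}).toReal
      ≤ Real.exp (-2⁻¹ * c) * 2 ^ n := by
  classical
  set T := (Finset.range n).image (fun j => v.take j) with hT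
  have hinj : ∀ j ∈ Finset.range n, ∀ j' ∈ Finset.range n,
      v.take j = v.take j' → j = j' := by
    intro j hj j' hj' h
    have h1 : (v.take j).length = j := by
      rw [List.length_take, hv]; exact min_eq_left (Finset.mem_range.mp hj).le
    have h2 : (v.take j').length = j' := by
      rw [List.length_take, hv]; exact min_eq_left (Finset.mem_range.mp hj').le
    rw [← h1, ← h2, h]
  have hsum : ∀ ω, ∑ j ∈ Finset.range n, E (v.take j) ω = (∑ u ∈ T, E u) ω := by
    intro ω
    rw [Finset.sum_apply, hT, Finset.sum_image hinj]
  have hcard : T.card = n := by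
    rw [hT, Finset.card_image_of_injOn hinj, Finset.card_range]
  have hintS : Integrable (fun ω => Real.exp (2⁻¹ * (∑ u ∈ T, E u) ω)) ℙ :=
    hindep.integrable_exp_mul_sum hmeas (fun u _ => hint u)
  have hchern := measure_ge_le_exp_mul_mgf (μ := ℙ) (X := ∑ u ∈ T, E u) c
    (by norm_num) hintS
  have hmgfS : mgf (∑ u ∈ T, E u) ℙ 2⁻¹ = 2 ^ n := by
    rw [hindep.mgf_sum hmeas T]
    simp_rw [hmgf]
    rw [Finset.prod_const, hcard]
  rw [hmgfS] at hchern
  have hset : {ω | c ≤ ∑ j ∈ Finset.range n, E (v.take j) ω}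
      = {ω | c ≤ (∑ u ∈ T, E u) ω} := by
    ext ω; simp [hsum ω]
  rw [hset]
  exact hchern

/-- For `v ∈ {1,2,3}ⁿ` (encoded as a list over `Fin 3` of length `n`) and a family
`E` of exponential lifetimes indexed by Ulam–Harris labels, the birth time of
individual `v` in a ternary branching process with `Exp(ε⁻²)` lifetimes is
`ε² Σ_{u proper prefix of v} E_u`; the structure contains the full regular ternary tree
of depth `n` by time `t` if every such birth time is at most `t`. -/
def containsRegularTree {Ω : Type*} (E : List (Fin 3) → Ω → ℝ) (ε t : ℝ) (n : ℕ)
    (ω : Ω) : Prop :=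
  ∀ v : List (Fin 3), v.length = n →
    ε ^ 2 * ∑ j ∈ Finset.range n, E (v.take j) ω ≤ t

theorem regular_tree_whp {Ω : Type*} [MeasureSpace Ω]
    [IsProbabilityMeasure (ℙ : Measure Ω)]
    (E : List (Fin 3) → Ω → ℝ)
    (hmeas : ∀ v, Measurable (E v))
    (hindep : iIndepFun E ℙ)
    (hdist : ∀ v, Measure.map (E v) ℙ = expMeasure 1)
    (k : ℕ) (A : ℝ) (hA : 0 < A) :
    ∃ a > (0 : ℝ), ∃ ε₁ : ℝ, 0 < ε₁ ∧ ε₁ < Real.exp (-1) ∧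
      ∀ ε ∈ Set.Ioo (0 : ℝ) ε₁, ∀ t : ℝ, a * ε ^ 2 * |Real.log ε| ≤ t →
        1 - ε ^ k
          ≤ (ℙ {ω | containsRegularTree E ε t ⌈A * |Real.log ε|⌉₊ ω}).toReal := by
  classical
  have hlog6 : (0:ℝ) < Real.log 6 := Real.log_pos (by norm_num)
  have hlog6le : Real.log 6 ≤ 2 := by
    rw [Real.log_le_iff_le_exp (by norm_num)]
    have h2 : Real.exp 2 = Real.exp 1 * Real.exp 1 := by
      rw [← Real.exp_add]; norm_num
    nlinarith [Real.exp_one_gt_d9]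
  refine ⟨2 * (A * Real.log 6 + k + 2), by nlinarith [mul_pos hA hlog6, (Nat.cast_nonneg k : (0:ℝ) ≤ (k:ℝ))],
    Real.exp (-1) / 2, by positivity, half_lt_self (Real.exp_pos _), ?_⟩
  rintro ε ⟨hε0, hε1⟩ t ht
  set a : ℝ := 2 * (A * Real.log 6 + k + 2) with ha_def
  set L : ℝ := |Real.log ε| with hL_def
  set n : ℕ := ⌈A * L⌉₊ with hn_def
  have hεlt : ε < Real.exp (-1) := hε1.trans (half_lt_self (Real.exp_pos _))
  have hlogneg : Real.log ε < -1 := by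
    have := Real.log_lt_log hε0 hεlt
    rwa [Real.log_exp] at this
  have hL : L = -Real.log ε := abs_of_neg (by linarith)
  have hL1 : 1 ≤ L := by rw [hL]; linarith
  have hncast : (n:ℝ) < A * L + 1 := Nat.ceil_lt_add_one (by positivity)
  have hε2 : (0:ℝ) < ε ^ 2 := by positivity
  have hεk : (0:ℝ) < ε ^ k := by positivity
  set G : Set Ω := {ω | containsRegularTree E ε t n ω} with hG_def
  have hGmeas : MeasurableSet G := by
    have : G = ⋂ (v : List (Fin 3)), ⋂ (_ : v.length = n),
        {ω | ε ^ 2 * ∑ j ∈ Finset.range n, E (v.take j) ω ≤ t} := by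
      ext ω; simp [hG_def, containsRegularTree, Set.mem_iInter]
    rw [this]
    exact MeasurableSet.iInter fun v => MeasurableSet.iInter fun _ =>
      measurableSet_le (measurable_const.mul
        (Finset.measurable_sum _ fun j _ => hmeas _)) measurable_const
  have hsub : Gᶜ ⊆ ⋃ (f : Fin n → Fin 3),
      {ω | a * L ≤ ∑ j ∈ Finset.range n, E ((List.ofFn f).take j) ω} := by
    intro ω hω
    simp only [hG_def, Set.mem_compl_iff, Set.mem_setOf_eq, containsRegularTree] at hω
    push_neg at hω
    obtain ⟨v, hv, hbad⟩ := hω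
    obtain ⟨f, hf⟩ := aux_exists_ofFn v hv
    refine Set.mem_iUnion.mpr ⟨f, ?_⟩
    simp only [Set.mem_setOf_eq, hf]
    have h := ht.trans_lt hbad
    nlinarith [h, hε2]
  have hreal : ((3:ℝ) ^ n) * (Real.exp (-2⁻¹ * (a * L)) * 2 ^ n) ≤ ε ^ k := by
    have h6 : (3:ℝ) ^ n * 2 ^ n = Real.exp (n * Real.log 6) := by
      rw [← mul_pow]
      norm_num
      rw [Real.exp_nat_mul, Real.exp_log (by norm_num : (0:ℝ) < 6)]
    have hεexp : ε ^ k = Real.exp (-(k * L)) := by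
      rw [hL]
      rw [show -((k:ℝ) * -Real.log ε) = k * Real.log ε by ring, Real.exp_nat_mul,
        Real.exp_log hε0]
    calc ((3:ℝ) ^ n) * (Real.exp (-2⁻¹ * (a * L)) * 2 ^ n)
        = ((3:ℝ) ^ n * 2 ^ n) * Real.exp (-2⁻¹ * (a * L)) := by ring
      _ = Real.exp (n * Real.log 6 + -2⁻¹ * (a * L)) := by rw [h6, ← Real.exp_add]
      _ ≤ Real.exp (-(k * L)) := by
          rw [Real.exp_le_exp, ha_def]
          nlinarith [mul_lt_mul_of_pos_right hncast hlog6, hL1, hlog6le, hlog6]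
      _ = ε ^ k := hεexp.symm
  have hbound : ℙ Gᶜ ≤ ENNReal.ofReal (ε ^ k) := by
    refine le_trans (measure_mono hsub) (le_trans (measure_iUnion_le _) ?_)
    have hone : ∀ f : Fin n → Fin 3,
        ℙ {ω | a * L ≤ ∑ j ∈ Finset.range n, E ((List.ofFn f).take j) ω}
          ≤ ENNReal.ofReal (Real.exp (-2⁻¹ * (a * L)) * 2 ^ n) := by
      intro f
      have h := aux_chernoff E hmeas hindep hdist
        (fun v => aux_integrable (E v) (hmeas v) (hdist v))
        (fun v => aux_mgf (E v) (hmeas v) (hdist v))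
        n (List.ofFn f) (by simp) (a * L)
      calc ℙ {ω | a * L ≤ ∑ j ∈ Finset.range n, E ((List.ofFn f).take j) ω}
          = ENNReal.ofReal ((ℙ {ω | a * L ≤ ∑ j ∈ Finset.range n,
              E ((List.ofFn f).take j) ω}).toReal) :=
            (ENNReal.ofReal_toReal (measure_ne_top _ _)).symm
        _ ≤ _ := ENNReal.ofReal_le_ofReal h
    calc ∑' f : Fin n → Fin 3, ℙ {ω | a * L ≤ ∑ j ∈ Finset.range n,
            E ((List.ofFn f).take j) ω}
        ≤ ∑' _f : Fin n → Fin 3, ENNReal.ofReal (Real.exp (-2⁻¹ * (a * L)) * 2 ^ n) :=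
          ENNReal.tsum_le_tsum hone
      _ = ((3 ^ n : ℕ) : ENNReal) * ENNReal.ofReal (Real.exp (-2⁻¹ * (a * L)) * 2 ^ n) := by
          rw [tsum_fintype, Finset.sum_const, Finset.card_univ, Fintype.card_fun,
            Fintype.card_fin, Fintype.card_fin, nsmul_eq_mul]
      _ = ENNReal.ofReal (((3:ℝ) ^ n) * (Real.exp (-2⁻¹ * (a * L)) * 2 ^ n)) := by
          rw [ENNReal.ofReal_mul (by positivity : (0:ℝ) ≤ (3:ℝ) ^ n),
            ENNReal.ofReal_pow (by norm_num : (0:ℝ) ≤ 3)]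
          norm_num
      _ ≤ ENNReal.ofReal (ε ^ k) := ENNReal.ofReal_le_ofReal hreal
  have h1 : (ℙ Gᶜ).toReal ≤ ε ^ k := ENNReal.toReal_le_of_le_ofReal (by positivity) hbound
  have hcompl : ℙ Gᶜ = 1 - ℙ G := by
    rw [measure_compl hGmeas (measure_ne_top _ _), measure_univ]
  have h2 : (ℙ Gᶜ).toReal = 1 - (ℙ G).toReal := by
    rw [hcompl, ENNReal.toReal_sub_of_le prob_le_one ENNReal.one_ne_top, ENNReal.toReal_one]
  have := h2 ▸ h1
  linarith
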